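/- Let Z be a complete separable metric space with its Borel σ-algebra and let β, γ, ε > 0 with εβ/γ < 1. Suppose A is a map from probability measures on Z to ℝ^d that is (β/γ)-Lipschitz in coupling form: for all probability measures μ, ν on Z and every coupling π of μ and ν, ‖A(μ) − A(ν)‖ ≤ (β/γ) ∫ dist(z, z') dπ(z, z'). Suppose D₁ : ℝ^d → P(Z) is ε-sensitive in coupling form. Define the level-1 retraining map S(θ) := A(D₁(θ)), the level-k distribution maps D_k(θ) := D₁(S^{k−1}(θ)) for k ≥ 1, and for nonnegative weights (α_k)_{k≥1} with Σ_{k≥1} α_k = 1 the mixture distribution map D̄(θ) := Σ_{k≥1} α_k D_k(θ) and the retraining map T(θ) := A(D̄(θ)). Then T is ρ-Lipschitz with ρ := Σ_{k≥1} α_k (εβ/γ)^k < 1; consequently T has a unique fixed point θ*, and the repeated risk minimization iterates θ_{t+1} := T(θ_t) satisfy ‖θ_t − θ*‖ ≤ ρ^t ‖θ_0 − θ*‖ for all t. -/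

import Mathlib

open MeasureTheory
open scoped NNReal ENNReal

/-- A coupling of two probability measures `μ` and `ν` on `Z` is a measure on `Z × Z`
whose first marginal is `μ` and whose second marginal is `ν`. -/
def IsCoupling {Z : Type*} [MeasurableSpace Z] (π : Measure (Z × Z)) (μ ν : Measure Z) : Prop :=
  π.map Prod.fst = μ ∧ π.map Prod.snd = ν

/-- **Retraining with level-`k` thinkers** (Theorem 3.1).
Here `α k` denotes the fraction of level-`(k+1)` thinkers, for `k = 0, 1, 2, …`, so that
`D₁ (S^[k] θ)` is the distribution induced by the level-`(k+1)` thinkers, and the rate is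
`ρ = ∑_{k≥1} αₖ (εβ/γ)^k = ∑' (k : ℕ), α k * (εβ/γ)^(k+1)`. -/
theorem level_k_retraining_convergence
    {Z : Type*} [MetricSpace Z] [CompleteSpace Z] [TopologicalSpace.SeparableSpace Z]
    [MeasurableSpace Z] [BorelSpace Z] {d : ℕ}
    (β γ ε : ℝ) (hβ : 0 < β) (hγ : 0 < γ) (hε : 0 < ε) (hcontr : ε * β / γ < 1)
    -- the learner's risk minimizer, assumed `(β/γ)`-Lipschitz in coupling form
    (A : Measure Z → EuclideanSpace ℝ (Fin d))
    (hA : ∀ μ ν : Measure Z, IsProbabilityMeasure μ → IsProbabilityMeasure ν →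
      ∀ π : Measure (Z × Z), IsCoupling π μ ν →
        ‖A μ - A ν‖ ≤ β / γ * ∫ p, dist p.1 p.2 ∂π)
    -- the level-1 distribution map, assumed `ε`-sensitive in coupling form
    (D₁ : EuclideanSpace ℝ (Fin d) → Measure Z)
    (hD₁prob : ∀ θ, IsProbabilityMeasure (D₁ θ))
    (hD₁sens : ∀ θ θ', ∃ π : Measure (Z × Z), IsCoupling π (D₁ θ) (D₁ θ') ∧
      ∫ p, dist p.1 p.2 ∂π ≤ ε * ‖θ - θ'‖)
    -- nonnegative mixture weights summing to one: `α k` is the fraction of level-`(k+1)` thinkers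
    (α : ℕ → ℝ≥0) (hα : ∑' k, α k = 1)
    -- the level-1 retraining map `S(θ) = A(D₁(θ))`
    (S : EuclideanSpace ℝ (Fin d) → EuclideanSpace ℝ (Fin d))
    (hS : ∀ θ, S θ = A (D₁ θ))
    -- the mixture distribution map `D̄(θ) = ∑_{k≥1} αₖ D_k(θ)` with `D_k(θ) = D₁(S^{k-1}(θ))`
    (Dbar : EuclideanSpace ℝ (Fin d) → Measure Z)
    (hDbar : ∀ θ, Dbar θ = Measure.sum fun k => α k • D₁ (S^[k] θ))
    -- the retraining map on the mixed population
    (T : EuclideanSpace ℝ (Fin d) → EuclideanSpace ℝ (Fin d))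
    (hT : ∀ θ, T θ = A (Dbar θ)) :
    ∃ ρ : ℝ, ρ = (∑' k : ℕ, (α k : ℝ) * (ε * β / γ) ^ (k + 1)) ∧ ρ < 1 ∧
      (∀ θ θ', ‖T θ - T θ'‖ ≤ ρ * ‖θ - θ'‖) ∧
      ∃ θstar, T θstar = θstar ∧ (∀ θ', T θ' = θ' → θ' = θstar) ∧
        ∀ (θ₀ : EuclideanSpace ℝ (Fin d)) (t : ℕ),
          ‖T^[t] θ₀ - θstar‖ ≤ ρ ^ t * ‖θ₀ - θstar‖ := by
  have hγ' : (0:ℝ) < β / γ := div_pos hβ hγ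
  set c : ℝ := ε * β / γ with hc
  have hc0 : 0 ≤ c := by positivity
  have hc1 : c < 1 := hcontr
  -- summability of α
  have hαs : Summable α := by
    by_contra h
    rw [tsum_eq_zero_of_not_summable h] at hα
    exact one_ne_zero hα.symm
  have hαsR : Summable (fun k => (α k : ℝ)) := NNReal.summable_coe.2 hαs
  have hαtsum : ∑' k, (α k : ℝ) = 1 := by
    rw [← NNReal.coe_tsum, hα, NNReal.coe_one]
  -- S is c-Lipschitz
  have hSlip : ∀ θ θ', ‖S θ - S θ'‖ ≤ c * ‖θ - θ'‖ := by
    intro θ θ'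
    obtain ⟨π, hπc, hπi⟩ := hD₁sens θ θ'
    have h1 := hA (D₁ θ) (D₁ θ') (hD₁prob θ) (hD₁prob θ') π hπc
    rw [hS, hS]
    calc ‖A (D₁ θ) - A (D₁ θ')‖ ≤ β / γ * ∫ p, dist p.1 p.2 ∂π := h1
      _ ≤ β / γ * (ε * ‖θ - θ'‖) := by
          exact mul_le_mul_of_nonneg_left hπi (le_of_lt hγ')
      _ = c * ‖θ - θ'‖ := by rw [hc]; ring
  have hSk : ∀ (k : ℕ) θ θ', ‖S^[k] θ - S^[k] θ'‖ ≤ c ^ k * ‖θ - θ'‖ := by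
    intro k
    induction k with
    | zero => intro θ θ'; simp
    | succ n ih =>
        intro θ θ'
        rw [Function.iterate_succ_apply', Function.iterate_succ_apply']
        calc ‖S (S^[n] θ) - S (S^[n] θ')‖ ≤ c * ‖S^[n] θ - S^[n] θ'‖ := hSlip _ _
          _ ≤ c * (c ^ n * ‖θ - θ'‖) := by
              exact mul_le_mul_of_nonneg_left (ih θ θ') hc0
          _ = c ^ (n + 1) * ‖θ - θ'‖ := by ring
  set ρ : ℝ := ∑' k : ℕ, (α k : ℝ) * c ^ (k + 1) with hρdef
  have hterm_nonneg : ∀ k : ℕ, (0:ℝ) ≤ (α k : ℝ) * c ^ (k + 1) := by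
    intro k; positivity
  have hterm_le : ∀ k : ℕ, (α k : ℝ) * c ^ (k + 1) ≤ (α k : ℝ) * c := by
    intro k
    apply mul_le_mul_of_nonneg_left _ (α k).coe_nonneg
    calc c ^ (k + 1) = c ^ k * c := pow_succ c k
      _ ≤ 1 * c := by
          apply mul_le_mul_of_nonneg_right _ hc0
          exact pow_le_one₀ hc0 (le_of_lt hc1)
      _ = c := one_mul c
  have hαc_summable : Summable (fun k => (α k : ℝ) * c) := hαsR.mul_right c
  have hρ_summable : Summable (fun k : ℕ => (α k : ℝ) * c ^ (k + 1)) :=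
    Summable.of_nonneg_of_le hterm_nonneg hterm_le hαc_summable
  have hρ0 : 0 ≤ ρ := tsum_nonneg hterm_nonneg
  have hρ1 : ρ < 1 := by
    have : ρ ≤ c := by
      calc ρ ≤ ∑' k, (α k : ℝ) * c := Summable.tsum_le_tsum hterm_le hρ_summable hαc_summable
        _ = (∑' k, (α k : ℝ)) * c := tsum_mul_right
        _ = c := by rw [hαtsum, one_mul]
    exact lt_of_le_of_lt this hc1
  -- Dbar probability measures
  have hDbarProb : ∀ θ, IsProbabilityMeasure (Dbar θ) := by
    intro θ
    constructor
    rw [hDbar, Measure.sum_apply _ MeasurableSet.univ]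
    have : ∀ k : ℕ, (α k • D₁ (S^[k] θ)) Set.univ = (α k : ℝ≥0∞) := by
      intro k
      rw [Measure.smul_apply, (hD₁prob (S^[k] θ)).measure_univ]
      simp [ENNReal.smul_def]
    simp_rw [this]
    rw [← ENNReal.coe_tsum hαs, hα, ENNReal.coe_one]
  -- T is ρ-Lipschitz
  have hTlip : ∀ θ θ', ‖T θ - T θ'‖ ≤ ρ * ‖θ - θ'‖ := by
    intro θ θ'
    choose π hπc hπi using fun k : ℕ => hD₁sens (S^[k] θ) (S^[k] θ')
    set πs : Measure (Z × Z) := Measure.sum (fun k => α k • π k) with hπs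
    have hcoupling : IsCoupling πs (Dbar θ) (Dbar θ') := by
      constructor
      · rw [hπs, Measure.map_sum measurable_fst.aemeasurable, hDbar]
        congr 1
        funext k
        rw [Measure.map_smul, (hπc k).1]
      · rw [hπs, Measure.map_sum measurable_snd.aemeasurable, hDbar]
        congr 1
        funext k
        rw [Measure.map_smul, (hπc k).2]
    have hAb := hA (Dbar θ) (Dbar θ') (hDbarProb θ) (hDbarProb θ') πs hcoupling
    have hbound : ∀ k : ℕ, ∫ p, dist p.1 p.2 ∂(α k • π k)
        ≤ (α k : ℝ) * (ε * (c ^ k * ‖θ - θ'‖)) := by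
      intro k
      rw [integral_smul_nnreal_measure]
      have h2 : ∫ p, dist p.1 p.2 ∂(π k) ≤ ε * (c ^ k * ‖θ - θ'‖) := by
        calc ∫ p, dist p.1 p.2 ∂(π k) ≤ ε * ‖S^[k] θ - S^[k] θ'‖ := hπi k
          _ ≤ ε * (c ^ k * ‖θ - θ'‖) :=
              mul_le_mul_of_nonneg_left (hSk k θ θ') (le_of_lt hε)
      simpa [NNReal.smul_def, smul_eq_mul] using
        mul_le_mul_of_nonneg_left h2 (α k).coe_nonneg
    have hRHS_summable : Summable (fun k : ℕ => (α k : ℝ) * (ε * (c ^ k * ‖θ - θ'‖))) := by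
      apply Summable.of_nonneg_of_le (fun k => by positivity)
        (fun k => ?_) (hαsR.mul_right (ε * ‖θ - θ'‖))
      apply mul_le_mul_of_nonneg_left _ (α k).coe_nonneg
      have : c ^ k * ‖θ - θ'‖ ≤ 1 * ‖θ - θ'‖ :=
        mul_le_mul_of_nonneg_right (pow_le_one₀ hc0 (le_of_lt hc1)) (norm_nonneg _)
      calc ε * (c ^ k * ‖θ - θ'‖) ≤ ε * (1 * ‖θ - θ'‖) :=
            mul_le_mul_of_nonneg_left this (le_of_lt hε)
        _ = ε * ‖θ - θ'‖ := by ring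
    have hint : ∫ p, dist p.1 p.2 ∂πs ≤ ∑' k : ℕ, (α k : ℝ) * (ε * (c ^ k * ‖θ - θ'‖)) := by
      by_cases hI : Integrable (fun p : Z × Z => dist p.1 p.2) πs
      · rw [hπs, integral_sum_measure hI]
        apply Summable.tsum_le_tsum hbound _ hRHS_summable
        exact Summable.of_nonneg_of_le (fun k => integral_nonneg fun p => dist_nonneg)
          hbound hRHS_summable
      · rw [integral_undef hI]
        exact tsum_nonneg fun k => by positivity
    calc ‖T θ - T θ'‖ = ‖A (Dbar θ) - A (Dbar θ')‖ := by rw [hT, hT]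
      _ ≤ β / γ * ∫ p, dist p.1 p.2 ∂πs := hAb
      _ ≤ β / γ * ∑' k : ℕ, (α k : ℝ) * (ε * (c ^ k * ‖θ - θ'‖)) :=
          mul_le_mul_of_nonneg_left hint (le_of_lt hγ')
      _ = ∑' k : ℕ, β / γ * ((α k : ℝ) * (ε * (c ^ k * ‖θ - θ'‖))) := tsum_mul_left.symm
      _ = ∑' k : ℕ, ((α k : ℝ) * c ^ (k + 1)) * ‖θ - θ'‖ := by
          congr 1
          funext k
          have hγne : γ ≠ 0 := ne_of_gt hγ
          rw [hc]
          field_simp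
          rw [pow_succ]
          linear_combination (-(β * ε * (α k : ℝ) * (β * ε / γ) ^ k * ‖θ - θ'‖)) * mul_inv_cancel₀ hγne
      _ = ρ * ‖θ - θ'‖ := by rw [hρdef, tsum_mul_right]
  refine ⟨ρ, rfl, hρ1, hTlip, ?_⟩
  have hlip : LipschitzWith ⟨ρ, hρ0⟩ T :=
    LipschitzWith.of_dist_le_mul fun x y => by
      rw [dist_eq_norm, dist_eq_norm]; exact hTlip x y
  have hcw : ContractingWith ⟨ρ, hρ0⟩ T := ⟨by exact_mod_cast hρ1, hlip⟩
  refine ⟨hcw.fixedPoint T, hcw.fixedPoint_isFixedPt, fun θ' h => hcw.fixedPoint_unique h, ?_⟩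
  intro θ₀ t
  have hfix : T (hcw.fixedPoint T) = hcw.fixedPoint T := hcw.fixedPoint_isFixedPt
  induction t with
  | zero => simp
  | succ n ih =>
      rw [Function.iterate_succ_apply']
      calc ‖T (T^[n] θ₀) - hcw.fixedPoint T‖
          = ‖T (T^[n] θ₀) - T (hcw.fixedPoint T)‖ := by rw [hfix]
        _ ≤ ρ * ‖T^[n] θ₀ - hcw.fixedPoint T‖ := hTlip _ _
        _ ≤ ρ * (ρ ^ n * ‖θ₀ - hcw.fixedPoint T‖) := mul_le_mul_of_nonneg_left ih hρ0
        _ = ρ ^ (n + 1) * ‖θ₀ - hcw.fixedPoint T‖ := by ring
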